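/- Let Z be a τ-bisimulation between monotone neighborhood models M₁ = (W₁, ◇₁, ϑ₁) and M₂ = (W₂, ◇₂, ϑ₂), where τ is a set of literals. Then for every modal formula φ all of whose literals lie in τ, Z preserves φ: if (w₁, w₂) ∈ Z and M₁, w₁ ⊨ φ then M₂, w₂ ⊨ φ. -/

import Mathlib

/-- Modal formulas in negation normal form. -/
inductive Fm where
  | var : ℕ → Fm
  | nvar : ℕ → Fm
  | bot : Fm
  | top : Fm
  | and : Fm → Fm → Fm
  | or : Fm → Fm → Fm
  | dia : Fm → Fm
  | box : Fm → Fm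

/-- Neighborhood semantics: the extension of a formula. -/
def nval {W : Type*} (d : Set W → Set W) (v : ℕ → Set W) : Fm → Set W
  | .var n => v n
  | .nvar n => (v n)ᶜ
  | .bot => ∅
  | .top => Set.univ
  | .and a b => nval d v a ∩ nval d v b
  | .or a b => nval d v a ∪ nval d v b
  | .dia a => d (nval d v a)
  | .box a => (d ((nval d v a)ᶜ))ᶜ

/-- Literals of a formula: `(n, true)` for `p_n`, `(n, false)` for `¬ p_n`. -/
def lits : Fm → Set (ℕ × Bool)
  | .var n => {(n, true)}
  | .nvar n => {(n, false)}
  | .bot => ∅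
  | .top => ∅
  | .and a b => lits a ∪ lits b
  | .or a b => lits a ∪ lits b
  | .dia a => lits a
  | .box a => lits a

/-- Extension of a literal under a valuation. -/
def litval {W : Type*} (v : ℕ → Set W) (l : ℕ × Bool) : Set W :=
  if l.2 then v l.1 else (v l.1)ᶜ

/-- Full image of a set under a relation. -/
def rimg {α β : Type*} (Z : Set (α × β)) (X : Set α) : Set β :=
  {b | ∃ a ∈ X, (a, b) ∈ Z}

/-- Inverse relation. -/
def rinv {α β : Type*} (Z : Set (α × β)) : Set (β × α) :=
  {p | (p.2, p.1) ∈ Z}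

/-- A τ-bisimulation between monotone neighborhood models preserves every formula
all of whose literals lie in τ. -/
theorem tau_bisimulation_preserves {W₁ W₂ : Type*}
    (d₁ : Set W₁ → Set W₁) (d₂ : Set W₂ → Set W₂)
    (h₁ : Monotone d₁) (h₂ : Monotone d₂)
    (ϑ₁ : ℕ → Set W₁) (ϑ₂ : ℕ → Set W₂)
    (τ : Set (ℕ × Bool)) (Z : Set (W₁ × W₂))
    (zig : ∀ X : Set W₁, rimg Z (d₁ X) ⊆ d₂ (rimg Z X))
    (zag : ∀ X : Set W₂, rimg (rinv Z) (d₂ X) ⊆ d₁ (rimg (rinv Z) X))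
    (hlit : ∀ l ∈ τ, rimg Z (litval ϑ₁ l) ⊆ litval ϑ₂ l)
    (φ : Fm) (hφ : lits φ ⊆ τ) :
    ∀ w₁ w₂, (w₁, w₂) ∈ Z → w₁ ∈ nval d₁ ϑ₁ φ → w₂ ∈ nval d₂ ϑ₂ φ := by
  induction φ with
  | var n =>
    intro w₁ w₂ hZ hw
    have := hlit (n, true) (hφ rfl) ⟨w₁, hw, hZ⟩
    simpa [litval, nval] using this
  | nvar n =>
    intro w₁ w₂ hZ hw
    have := hlit (n, false) (hφ rfl) ⟨w₁, hw, hZ⟩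
    simpa [litval, nval] using this
  | bot => intro w₁ w₂ _ hw; exact hw.elim
  | top => intro w₁ w₂ _ _; trivial
  | and a b iha ihb =>
    intro w₁ w₂ hZ hw
    exact ⟨iha (fun l hl => hφ (Or.inl hl)) w₁ w₂ hZ hw.1,
           ihb (fun l hl => hφ (Or.inr hl)) w₁ w₂ hZ hw.2⟩
  | or a b iha ihb =>
    intro w₁ w₂ hZ hw
    rcases hw with hw | hw
    · exact Or.inl (iha (fun l hl => hφ (Or.inl hl)) w₁ w₂ hZ hw)
    · exact Or.inr (ihb (fun l hl => hφ (Or.inr hl)) w₁ w₂ hZ hw)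
  | dia a iha =>
    intro w₁ w₂ hZ hw
    have h := zig (nval d₁ ϑ₁ a) ⟨w₁, hw, hZ⟩
    refine h₂ ?_ h
    rintro b ⟨a', ha', hZ'⟩
    exact iha hφ a' b hZ' ha'
  | box a iha =>
    intro w₁ w₂ hZ hw
    intro hcon
    apply hw
    have h := zag ((nval d₂ ϑ₂ a)ᶜ) ⟨w₂, hcon, hZ⟩
    refine h₁ ?_ h
    rintro a' ⟨b, hb, hZ'⟩
    exact fun ha' => hb (iha hφ a' b hZ' ha')
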